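/- For every v ≥ 0 and every positive integer n, the integer 𝒫_v(8n-1) = Σ_{r=0}^{v} (-1)^r C(2v+1, 2r) (2r-3)(2r-1) (8n-1)^r is nonzero. -/

import Mathlib

lemma pow3_mod8 (k : ℕ) : 3 ^ k % 8 = 1 ∨ 3 ^ k % 8 = 3 := by
  induction k with
  | zero => left; rfl
  | succ k ih =>
    rcases ih with h | h <;>
    · rw [pow_succ, Nat.mul_mod, h]
      simp [Nat.mul_mod]

lemma exists_prime_ne_three (n : ℕ) (hn : 1 ≤ n) :
    ∃ p : ℕ, p.Prime ∧ p ∣ 8 * n - 1 ∧ p ≠ 3 := by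
  set m := 8 * n - 1 with hm
  have hm7 : m % 8 = 7 := by
    have : m = 8 * (n - 1) + 7 := by omega
    omega
  have hm1 : 1 < m := by omega
  by_contra h
  push_neg at h
  -- every prime divisor of m is 3, so m is a power of 3
  have h3 : ∀ p : ℕ, p.Prime → p ∣ m → p = 3 := fun p hp hd => h p hp hd
  obtain ⟨k, hk⟩ : ∃ k, m = 3 ^ k :=
    ⟨_, Nat.eq_prime_pow_of_unique_prime_dvd (by omega) (fun {d} hd hdd => h3 d hd hdd)⟩
  rcases pow3_mod8 k with h1 | h1 <;> omega

theorem calP_at_eight_n_sub_one_ne_zero (v : ℕ) (n : ℕ) (hn : 1 ≤ n) :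
    (∑ r ∈ Finset.range (v + 1),
        (-1 : ℤ) ^ r * (Nat.choose (2 * v + 1) (2 * r)) * (2 * (r : ℤ) - 3) *
          (2 * (r : ℤ) - 1) * (8 * (n : ℤ) - 1) ^ r) ≠ 0 := by
  obtain ⟨p, hp, hdvd, hp3⟩ := exists_prime_ne_three n hn
  intro hsum
  have hx : (((8 * (n : ℤ) - 1) : ℤ) : ZMod p) = 0 := by
    have : ((8 * n - 1 : ℕ) : ZMod p) = 0 := (ZMod.natCast_eq_zero_iff _ _).2 hdvd
    rw [show ((8 * (n : ℤ) - 1) : ℤ) = ((8 * n - 1 : ℕ) : ℤ) by push_cast [Nat.cast_sub (by omega : 1 ≤ 8 * n)]; ring]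
    exact_mod_cast this
  have := congrArg (fun z : ℤ => (z : ZMod p)) hsum
  simp only [Int.cast_zero] at this
  push_cast at this
  push_cast at hx
  rw [hx] at this
  rw [Finset.sum_range_succ'] at this
  simp [zero_pow] at this
  -- this : (3 : ZMod p) = 0
  have h3 : (3 : ZMod p) = 0 := by linear_combination this
  have : p ∣ 3 := by
    have := (ZMod.natCast_eq_zero_iff 3 p).1 (by exact_mod_cast h3)
    exact this
  exact hp3 ((Nat.prime_dvd_prime_iff_eq hp (by norm_num)).1 this)
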